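/- Let A be a ring that is free as a Z-module with a finite Z_+-basis B = {b_i} (i.e., all structure constants b_i * b_j = Σ_k c_{ij}^k b_k satisfy c_{ij}^k ≥ 0). Then up to equivalence there are only finitely many irreducible Z_+-modules over A. -/

import Mathlib

/-- A ℤ₊-module over a ring A with fixed ℤ-basis b : a free ℤ-module with a fixed basis
on which each basis element of A acts with nonnegative integer structure constants. -/
structure ZPlusModule {A : Type} [Ring A] {ι : Type} (b : Module.Basis ι ℤ A) where
  carrier : Type
  [acg : AddCommGroup carrier]
  [mod : Module A carrier]
  κ : Type
  basis : Module.Basis κ ℤ carrier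
  nonneg : ∀ (i : ι) (j k : κ), 0 ≤ basis.repr (b i • basis j) k

attribute [instance] ZPlusModule.acg ZPlusModule.mod

namespace ZPlusModule

variable {A : Type} [Ring A] {ι : Type} {b : Module.Basis ι ℤ A}

/-- Equivalence of ℤ₊-modules: a bijection of bases inducing an A-module isomorphism. -/
def Equiv (M₁ M₂ : ZPlusModule b) : Prop :=
  ∃ (e : M₁.κ ≃ M₂.κ) (f : M₁.carrier ≃ₗ[A] M₂.carrier),
    ∀ j, f (M₁.basis j) = M₂.basis (e j)

/-- A ℤ₊-submodule is a subset J of the basis whose ℤ-span is an A-submodule;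
M is irreducible if its only ℤ₊-submodules are 0 and M. -/
def Irred (M : ZPlusModule b) : Prop :=
  Nonempty M.κ ∧
  ∀ J : Set M.κ,
    (∀ (a : A) (x : M.carrier), x ∈ Submodule.span ℤ (⇑M.basis '' J) →
      a • x ∈ Submodule.span ℤ (⇑M.basis '' J)) → J = ∅ ∨ J = Set.univ

end ZPlusModule

set_option linter.unusedSectionVars false

namespace ZPlusModule
variable {A : Type} [Ring A] {ι : Type} [Fintype ι] {b : Module.Basis ι ℤ A}

noncomputable def zel (b : Module.Basis ι ℤ A) : A := ∑ i, b i
noncomputable def Nb (b : Module.Basis ι ℤ A) : ℤ := ∑ k, b.repr (zel b * zel b) k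
noncomputable def Zc (M : ZPlusModule b) (j k : M.κ) : ℤ :=
  M.basis.repr (zel b • M.basis j) k

lemma Zc_eq_sum (M : ZPlusModule b) (j k : M.κ) :
    M.Zc j k = ∑ i, M.basis.repr (b i • M.basis j) k := by
  rw [Zc, zel, Finset.sum_smul, map_sum]
  exact Finsupp.finset_sum_apply _ _ _

lemma Zc_nonneg (M : ZPlusModule b) (j k : M.κ) : 0 ≤ M.Zc j k := by
  rw [Zc_eq_sum]; exact Finset.sum_nonneg fun i _ => M.nonneg i j k

lemma d_le_Zc (M : ZPlusModule b) (i : ι) (j k : M.κ) :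
    M.basis.repr (b i • M.basis j) k ≤ M.Zc j k := by
  rw [Zc_eq_sum]
  exact Finset.single_le_sum (f := fun i => M.basis.repr (b i • M.basis j) k)
    (fun i _ => M.nonneg i j k) (Finset.mem_univ i)

lemma Nb_coeff_nonneg (hring : ∀ i j k, 0 ≤ b.repr (b i * b j) k) (k : ι) :
    0 ≤ b.repr (zel b * zel b) k := by
  rw [zel, Finset.sum_mul]
  simp only [Finset.mul_sum, map_sum, Finsupp.finset_sum_apply]
  exact Finset.sum_nonneg fun i _ => Finset.sum_nonneg fun i' _ => hring i i' k

lemma coeff_le_Nb (hring : ∀ i j k, 0 ≤ b.repr (b i * b j) k) (k : ι) :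
    b.repr (zel b * zel b) k ≤ Nb b :=
  Finset.single_le_sum (f := fun k => b.repr (zel b * zel b) k)
    (fun i _ => Nb_coeff_nonneg hring i) (Finset.mem_univ k)

lemma Nb_nonneg (hring : ∀ i j k, 0 ≤ b.repr (b i * b j) k) : 0 ≤ Nb b :=
  Finset.sum_nonneg fun i _ => Nb_coeff_nonneg hring i

/-- generic expansion of coefficients of z • y -/
lemma repr_smul_eq_sum (M : ZPlusModule b) (z : A) (y : M.carrier) (k : M.κ) :
    M.basis.repr (z • y) k
      = (M.basis.repr y).sum fun l c => c * M.basis.repr (z • M.basis l) k := by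
  have h1 : z • y = (M.basis.repr y).sum fun l c => c • (z • M.basis l) := by
    conv_lhs => rw [← M.basis.linearCombination_repr y]
    rw [Finsupp.linearCombination_apply, Finsupp.smul_sum]
    exact Finsupp.sum_congr fun l _ => smul_comm z _ _
  rw [h1, map_finsuppSum, Finsupp.sum_apply]
  simp [Finsupp.sum]

/-- The key inequality: ∑_{l ∈ S} Z_{jl} Z_{lk} ≤ N · Z_{jk}. -/
lemma key_ineq (hring : ∀ i j k, 0 ≤ b.repr (b i * b j) k)
    (M : ZPlusModule b) (j k : M.κ) (S : Finset M.κ) :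
    ∑ l ∈ S, M.Zc j l * M.Zc l k ≤ Nb b * M.Zc j k := by
  classical
  set y := zel b • M.basis j with hy
  -- upper bound: repr of (z*z) • m j
  have hupper : M.basis.repr (zel b • y) k ≤ Nb b * M.Zc j k := by
    have hzz : zel b • y = (zel b * zel b) • M.basis j := smul_smul _ _ _
    have hexp : zel b * zel b = ∑ i, b.repr (zel b * zel b) i • b i :=
      (b.sum_repr _).symm
    rw [hzz, hexp, Finset.sum_smul]
    simp only [smul_assoc, map_sum, map_smul, Finsupp.finset_sum_apply, Finsupp.smul_apply,
      smul_eq_mul]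
    calc ∑ i, b.repr (zel b * zel b) i * M.basis.repr (b i • M.basis j) k
        ≤ ∑ i, Nb b * M.basis.repr (b i • M.basis j) k := by
          refine Finset.sum_le_sum fun i _ => ?_
          exact mul_le_mul_of_nonneg_right (coeff_le_Nb hring i) (M.nonneg i j k)
      _ = Nb b * M.Zc j k := by rw [← Finset.mul_sum, ← Zc_eq_sum]
  -- lower bound
  have hlow : ∑ l ∈ S, M.Zc j l * M.Zc l k ≤ M.basis.repr (zel b • y) k := by
    rw [repr_smul_eq_sum, Finsupp.sum]
    have h0 : ∀ l ∉ (M.basis.repr y).support, M.Zc j l * M.Zc l k = 0 := by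
      intro l hl
      have : M.Zc j l = 0 := Finsupp.notMem_support_iff.mp hl
      rw [this, zero_mul]
    calc ∑ l ∈ S, M.Zc j l * M.Zc l k
        = ∑ l ∈ S ∩ (M.basis.repr y).support, M.Zc j l * M.Zc l k := by
          refine (Finset.sum_subset Finset.inter_subset_left ?_).symm
          intro x hx hnx
          exact h0 x fun hsupp => hnx (Finset.mem_inter.mpr ⟨hx, hsupp⟩)
      _ ≤ ∑ l ∈ (M.basis.repr y).support, M.Zc j l * M.Zc l k :=
          Finset.sum_le_sum_of_subset_of_nonneg Finset.inter_subset_right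
            (fun l _ _ => mul_nonneg (M.Zc_nonneg j l) (M.Zc_nonneg l k))
      _ = ∑ l ∈ (M.basis.repr y).support, M.basis.repr y l * M.basis.repr (zel b • M.basis l) k :=
          Finset.sum_congr rfl fun l _ => rfl
  exact hlow.trans hupper

end ZPlusModule

namespace ZPlusModule
variable {A : Type} [Ring A] {ι : Type} [Fintype ι] {b : Module.Basis ι ℤ A}

/-- edge relation of the matrix Z -/
def rel (M : ZPlusModule b) (j k : M.κ) : Prop := M.Zc j k ≠ 0

lemma span_closed (M : ZPlusModule b) (J : Set M.κ)
    (hJ : ∀ j ∈ J, ∀ k, M.Zc j k ≠ 0 → k ∈ J) :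
    ∀ (a : A) (x : M.carrier), x ∈ Submodule.span ℤ (⇑M.basis '' J) →
      a • x ∈ Submodule.span ℤ (⇑M.basis '' J) := by
  have hb : ∀ (i : ι), ∀ j ∈ J, b i • M.basis j ∈ Submodule.span ℤ (⇑M.basis '' J) := by
    intro i j hj
    have hexp : b i • M.basis j
        = (M.basis.repr (b i • M.basis j)).sum fun l c => c • M.basis l := by
      conv_lhs => rw [← M.basis.linearCombination_repr (b i • M.basis j)]
      rw [Finsupp.linearCombination_apply]
    rw [hexp, Finsupp.sum]
    refine Submodule.sum_mem _ fun l hl => Submodule.smul_mem _ _ ?_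
    refine Submodule.subset_span ⟨l, hJ j hj l ?_, rfl⟩
    have hne : M.basis.repr (b i • M.basis j) l ≠ 0 := Finsupp.mem_support_iff.mp hl
    have hpos : 0 < M.basis.repr (b i • M.basis j) l :=
      lt_of_le_of_ne (M.nonneg i j l) (Ne.symm hne)
    exact ne_of_gt (lt_of_lt_of_le hpos (M.d_le_Zc i j l))
  have hbx : ∀ (i : ι), ∀ x ∈ Submodule.span ℤ (⇑M.basis '' J),
      b i • x ∈ Submodule.span ℤ (⇑M.basis '' J) := by
    intro i x hx
    induction hx using Submodule.span_induction with
    | mem x hx => obtain ⟨l, hl, rfl⟩ := hx; exact hb i l hl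
    | zero => rw [smul_zero]; exact Submodule.zero_mem _
    | add x y _ _ hx hy => rw [smul_add]; exact Submodule.add_mem _ hx hy
    | smul c x _ hx => rw [smul_comm]; exact Submodule.smul_mem _ _ hx
  intro a x hx
  have ha : a = ∑ i, b.repr a i • b i := (b.sum_repr a).symm
  rw [ha, Finset.sum_smul]
  refine Submodule.sum_mem _ fun i _ => ?_
  rw [smul_assoc]
  exact Submodule.smul_mem _ _ (hbx i x hx)

lemma conn (M : ZPlusModule b) (hi : M.Irred) (j k : M.κ) :
    Relation.ReflTransGen M.rel j k := by
  set J : Set M.κ := {k | Relation.ReflTransGen M.rel j k} with hJdef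
  have hJ : ∀ l ∈ J, ∀ k', M.Zc l k' ≠ 0 → k' ∈ J :=
    fun l hl k' h => Relation.ReflTransGen.tail hl h
  rcases hi.2 J (M.span_closed J hJ) with h | h
  · exact absurd (Set.eq_empty_iff_forall_notMem.mp h j) (fun hh => hh Relation.ReflTransGen.refl)
  · have : k ∈ J := h.symm ▸ Set.mem_univ k
    exact this

lemma two_path (hring : ∀ i j k, 0 ≤ b.repr (b i * b j) k) (M : ZPlusModule b)
    {j l k : M.κ} (h1 : M.Zc j l ≠ 0) (h2 : M.Zc l k ≠ 0) : M.Zc j k ≠ 0 := by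
  have hp1 : 0 < M.Zc j l := lt_of_le_of_ne (M.Zc_nonneg j l) (Ne.symm h1)
  have hp2 : 0 < M.Zc l k := lt_of_le_of_ne (M.Zc_nonneg l k) (Ne.symm h2)
  have hk := key_ineq hring M j k {l}
  rw [Finset.sum_singleton] at hk
  intro h0
  rw [h0, mul_zero] at hk
  exact absurd (lt_of_lt_of_le (mul_pos hp1 hp2) hk) (lt_irrefl 0)

lemma transGen_rel (hring : ∀ i j k, 0 ≤ b.repr (b i * b j) k) (M : ZPlusModule b)
    {j k : M.κ} (h : Relation.TransGen M.rel j k) : M.rel j k := by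
  induction h with
  | single h => exact h
  | tail _ h ih => exact two_path hring M ih h

lemma pos_ne (hring : ∀ i j k, 0 ≤ b.repr (b i * b j) k) (M : ZPlusModule b)
    (hi : M.Irred) {j k : M.κ} (hne : j ≠ k) : 0 < M.Zc j k := by
  have h := M.conn hi j k
  rcases Relation.reflTransGen_iff_eq_or_transGen.mp h with h | h
  · exact absurd h.symm hne
  · exact lt_of_le_of_ne (M.Zc_nonneg j k) (Ne.symm (transGen_rel hring M h))

lemma pos_all (hring : ∀ i j k, 0 ≤ b.repr (b i * b j) k) (M : ZPlusModule b)
    (hi : M.Irred) (hex : ∃ x y : M.κ, x ≠ y) (j k : M.κ) : 0 < M.Zc j k := by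
  rcases eq_or_ne j k with rfl | hne
  · obtain ⟨x, y, hxy⟩ := hex
    have : ∃ l, l ≠ j := by
      rcases eq_or_ne x j with rfl | h
      · exact ⟨y, fun h' => hxy h'.symm⟩
      · exact ⟨x, h⟩
    obtain ⟨l, hl⟩ := this
    have h1 := pos_ne hring M hi (Ne.symm hl)
    have h2 := pos_ne hring M hi hl
    exact lt_of_le_of_ne (M.Zc_nonneg j j)
      (Ne.symm (two_path hring M (ne_of_gt h1) (ne_of_gt h2)))
  · exact pos_ne hring M hi hne

end ZPlusModule

namespace ZPlusModule
variable {A : Type} [Ring A] {ι : Type} [Fintype ι] {b : Module.Basis ι ℤ A}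

lemma diag_le (hring : ∀ i j k, 0 ≤ b.repr (b i * b j) k) (M : ZPlusModule b)
    {j : M.κ} (h : 0 < M.Zc j j) : M.Zc j j ≤ Nb b := by
  have hk := key_ineq hring M j j {j}
  rw [Finset.sum_singleton] at hk
  exact le_of_mul_le_mul_right hk h

lemma Zc_le_sq (hring : ∀ i j k, 0 ≤ b.repr (b i * b j) k) (M : ZPlusModule b)
    (hi : M.Irred) (j k : M.κ) : M.Zc j k ≤ Nb b ^ 2 := by
  have hN := Nb_nonneg (b := b) hring
  by_cases hex : ∃ x y : M.κ, x ≠ y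
  · have hpos := pos_all hring M hi hex
    have h1 : M.Zc j k ≤ M.Zc j k * M.Zc k j :=
      le_mul_of_one_le_right (M.Zc_nonneg j k) (hpos k j)
    have hk := key_ineq hring M j j {k}
    rw [Finset.sum_singleton] at hk
    have h2 : Nb b * M.Zc j j ≤ Nb b * Nb b :=
      mul_le_mul_of_nonneg_left (diag_le hring M (hpos j j)) hN
    rw [pow_two]
    exact h1.trans (hk.trans h2)
  · push_neg at hex
    have hkj : k = j := hex k j
    subst hkj
    rcases eq_or_lt_of_le (M.Zc_nonneg k k) with h0 | hpos
    · rw [← h0]; positivity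
    · have h1 : M.Zc k k ≤ Nb b := diag_le hring M hpos
      have h2 : 1 ≤ Nb b := le_trans hpos h1
      rw [pow_two]
      exact h1.trans (le_mul_of_one_le_left hN h2)

lemma d_le_sq (hring : ∀ i j k, 0 ≤ b.repr (b i * b j) k) (M : ZPlusModule b)
    (hi : M.Irred) (i : ι) (j k : M.κ) :
    M.basis.repr (b i • M.basis j) k ≤ Nb b ^ 2 :=
  (M.d_le_Zc i j k).trans (Zc_le_sq hring M hi j k)

lemma kappa_finite (hring : ∀ i j k, 0 ≤ b.repr (b i * b j) k) (M : ZPlusModule b)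
    (hi : M.Irred) : Finite M.κ := by
  by_contra h
  have hinf : Infinite M.κ := not_finite_iff_infinite.mp h
  obtain ⟨j⟩ := hi.1
  have hex : ∃ x y : M.κ, x ≠ y := exists_pair_ne M.κ
  have hpos := pos_all hring M hi hex
  obtain ⟨S, hS⟩ := Infinite.exists_subset_card_eq M.κ ((Nb b ^ 2).toNat + 1)
  have h1 : (S.card : ℤ) ≤ ∑ l ∈ S, M.Zc j l * M.Zc l j := by
    have := Finset.card_nsmul_le_sum S (fun l => M.Zc j l * M.Zc l j) 1
      (fun l _ => mul_pos (hpos j l) (hpos l j))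
    simpa using this
  have h2 := key_ineq hring M j j S
  have h3 : Nb b * M.Zc j j ≤ Nb b ^ 2 := by
    rw [pow_two]
    exact mul_le_mul_of_nonneg_left (diag_le hring M (hpos j j)) (Nb_nonneg hring)
  have h4 : ((Nb b ^ 2).toNat : ℤ) = Nb b ^ 2 := Int.toNat_of_nonneg (by positivity)
  rw [hS] at h1
  omega

lemma card_le (hring : ∀ i j k, 0 ≤ b.repr (b i * b j) k) (M : ZPlusModule b)
    (hi : M.Irred) [Fintype M.κ] : Fintype.card M.κ ≤ (Nb b ^ 2).toNat + 1 := by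
  have h4 : ((Nb b ^ 2).toNat : ℤ) = Nb b ^ 2 := Int.toNat_of_nonneg (by positivity)
  by_cases hex : ∃ x y : M.κ, x ≠ y
  · obtain ⟨j⟩ := hi.1
    have hpos := pos_all hring M hi hex
    have h1 : ((Finset.univ : Finset M.κ).card : ℤ)
        ≤ ∑ l : M.κ, M.Zc j l * M.Zc l j := by
      have := Finset.card_nsmul_le_sum Finset.univ (fun l => M.Zc j l * M.Zc l j) 1
        (fun l _ => mul_pos (hpos j l) (hpos l j))
      simpa using this
    have h2 := key_ineq hring M j j Finset.univ
    have h3 : Nb b * M.Zc j j ≤ Nb b ^ 2 := by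
      rw [pow_two]
      exact mul_le_mul_of_nonneg_left (diag_le hring M (hpos j j)) (Nb_nonneg hring)
    rw [Finset.card_univ] at h1
    omega
  · push_neg at hex
    have : Fintype.card M.κ ≤ 1 := Fintype.card_le_one_iff.mpr hex
    omega

end ZPlusModule

namespace ZPlusModule
variable {A : Type} [Ring A] {ι : Type} [Fintype ι] {b : Module.Basis ι ℤ A}

lemma repr_basis_equiv {M₁ M₂ : Type} [AddCommGroup M₁] [AddCommGroup M₂]
    {κ₁ κ₂ : Type} (m₁ : Module.Basis κ₁ ℤ M₁) (m₂ : Module.Basis κ₂ ℤ M₂) (e : κ₁ ≃ κ₂)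
    (x : M₁) (k : κ₁) : m₂.repr (m₁.equiv m₂ e x) (e k) = m₁.repr x k := by
  rw [Module.Basis.equiv]
  simp only [LinearEquiv.trans_apply, Module.Basis.repr_symm_apply, Module.Basis.repr_linearCombination]
  rw [show e k = e.symm.symm k from rfl, ← Module.Basis.repr_reindex_apply,
    Module.Basis.repr_linearCombination]

lemma equiv_of_matrix (M₁ M₂ : ZPlusModule b) (e : M₁.κ ≃ M₂.κ)
    (hmat : ∀ (i : ι) (j k : M₁.κ),
      M₂.basis.repr (b i • M₂.basis (e j)) (e k) = M₁.basis.repr (b i • M₁.basis j) k) :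
    Equiv M₁ M₂ := by
  set g : M₁.carrier ≃ₗ[ℤ] M₂.carrier := M₁.basis.equiv M₂.basis e with hg
  -- core computation
  have hcore : ∀ (i : ι) (j : M₁.κ), g (b i • M₁.basis j) = b i • M₂.basis (e j) := by
    intro i j
    apply M₂.basis.repr.injective
    ext k'
    obtain ⟨k, rfl⟩ := e.surjective k'
    rw [repr_basis_equiv, hmat]
  -- smul commutation for all a, on basis vectors
  have hbasis : ∀ (a : A) (j : M₁.κ), g (a • M₁.basis j) = a • M₂.basis (e j) := by
    intro a j
    have haexp : a = ∑ i, b.repr a i • b i := (b.sum_repr a).symm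
    rw [haexp]
    simp only [Finset.sum_smul, smul_assoc, map_sum, map_smul]
    exact Finset.sum_congr rfl fun i _ => by rw [hcore]
  -- smul commutation everywhere
  have hsmul : ∀ (a : A) (x : M₁.carrier), g (a • x) = a • g x := by
    intro a x
    have hx : x ∈ (⊤ : Submodule ℤ M₁.carrier) := Submodule.mem_top
    rw [← M₁.basis.span_eq] at hx
    induction hx using Submodule.span_induction with
    | mem x hx =>
        obtain ⟨j, rfl⟩ := hx
        rw [hbasis, Module.Basis.equiv_apply]
    | zero => rw [smul_zero, map_zero, smul_zero]
    | add x y _ _ hx hy => rw [smul_add, map_add, map_add, smul_add, hx, hy]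
    | smul c x _ hx =>
        calc g (a • c • x) = g (c • (a • x)) := by rw [smul_comm]
          _ = c • g (a • x) := map_smul g c _
          _ = c • (a • g x) := by rw [hx]
          _ = a • (c • g x) := smul_comm c a (g x)
          _ = a • g (c • x) := by rw [map_smul]
  refine ⟨e, LinearEquiv.mk (LinearMap.mk (AddHom.mk g (map_add g)) hsmul) g.symm
    g.left_inv g.right_inv, fun j => ?_⟩
  show g (M₁.basis j) = _
  exact Module.Basis.equiv_apply _ _ _ _

end ZPlusModule


/-- Proposition 1: over a ℤ₊-ring A of finite rank over ℤ there are, up to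
equivalence, only finitely many irreducible ℤ₊-modules: any family of pairwise
inequivalent irreducible ℤ₊-modules is finite. -/
theorem finitely_many_irreducible_ZPlus_modules
    {A : Type} [Ring A] {ι : Type} [Fintype ι] (b : Module.Basis ι ℤ A)
    (hring : ∀ i j k, 0 ≤ b.repr (b i * b j) k)
    (T : Type) (fam : T → ZPlusModule b)
    (hirr : ∀ t, (fam t).Irred)
    (hinj : ∀ t₁ t₂, ZPlusModule.Equiv (fam t₁) (fam t₂) → t₁ = t₂) :
    Finite T := by
  classical
  set C : ℕ := ((ZPlusModule.Nb b) ^ 2).toNat with hC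
  set B : ℕ := C + 1 with hB
  have hfin : ∀ t, Finite (fam t).κ := fun t =>
    ZPlusModule.kappa_finite hring (fam t) (hirr t)
  have hne : ∀ t, Nonempty (fam t).κ := fun t => (hirr t).1
  let ft : ∀ t, Fintype (fam t).κ := fun t => @Fintype.ofFinite _ (hfin t)
  have hemb : ∀ t, ∃ w : (fam t).κ → Fin B, Function.Injective w := fun t => by
    letI := ft t
    have h1 : Fintype.card (fam t).κ ≤ Fintype.card (Fin B) := by
      rw [Fintype.card_fin]
      exact ZPlusModule.card_le hring (fam t) (hirr t)
    obtain ⟨w⟩ := Function.Embedding.nonempty_iff_card_le.mpr h1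
    exact ⟨w, w.injective⟩
  choose u hu using hemb
  let v : ∀ t, Fin B → (fam t).κ := fun t => Function.invFun (u t)
  have hvu : ∀ t j, v t (u t j) = j := fun t j => by
    haveI := hne t
    exact Function.leftInverse_invFun (hu t) j
  let d : ∀ t, ι → (fam t).κ → (fam t).κ → ℤ := fun t i j k =>
    (fam t).basis.repr (b i • (fam t).basis j) k
  have hd0 : ∀ t i j k, 0 ≤ d t i j k := fun t i j k => (fam t).nonneg i j k
  have hdC : ∀ t i j k, (d t i j k).toNat ≤ C := fun t i j k => by
    rw [hC]
    exact Int.toNat_le_toNat (ZPlusModule.d_le_sq hring (fam t) (hirr t) i j k)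
  have hBpos : 0 < B := Nat.succ_pos C
  let code : T → Set (Fin B) × (ι → Fin B → Fin B → Fin B) := fun t =>
    (Set.range (u t), fun i p q => ⟨(d t i (v t p) (v t q)).toNat % B, Nat.mod_lt _ hBpos⟩)
  have hcodeinj : Function.Injective code := by
    intro t₁ t₂ h
    have hrange : Set.range (u t₁) = Set.range (u t₂) := congrArg Prod.fst h
    have hmatf := congrArg Prod.snd h
    let e : (fam t₁).κ ≃ (fam t₂).κ :=
      (Equiv.ofInjective (u t₁) (hu t₁)).trans ((Equiv.setCongr hrange).trans
        (Equiv.ofInjective (u t₂) (hu t₂)).symm)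
    have hue : ∀ j, u t₂ (e j) = u t₁ j := by
      intro j
      simp only [e, Equiv.trans_apply, Equiv.setCongr_apply,
        Equiv.apply_ofInjective_symm, Equiv.ofInjective_apply]
    refine hinj t₁ t₂ (ZPlusModule.equiv_of_matrix (fam t₁) (fam t₂) e ?_)
    intro i j k
    have h1 := congrFun (congrFun (congrFun hmatf i) (u t₁ j)) (u t₁ k)
    have h2 : (d t₁ i (v t₁ (u t₁ j)) (v t₁ (u t₁ k))).toNat % B
        = (d t₂ i (v t₂ (u t₁ j)) (v t₂ (u t₁ k))).toNat % B := congrArg Fin.val h1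
    rw [hvu t₁ j, hvu t₁ k, ← hue j, ← hue k, hvu t₂ (e j), hvu t₂ (e k)] at h2
    have hlt1 : (d t₁ i j k).toNat < B := Nat.lt_succ_of_le (hdC t₁ i j k)
    have hlt2 : (d t₂ i (e j) (e k)).toNat < B := Nat.lt_succ_of_le (hdC t₂ i _ _)
    rw [Nat.mod_eq_of_lt hlt1, Nat.mod_eq_of_lt hlt2] at h2
    have h3 : d t₂ i (e j) (e k) = d t₁ i j k := by
      have e1 := Int.toNat_of_nonneg (hd0 t₁ i j k)
      have e2 := Int.toNat_of_nonneg (hd0 t₂ i (e j) (e k))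
      omega
    exact h3
  exact Finite.of_injective code hcodeinj
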